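/- Let κ > 0 and ζ > 0, and define r₀ : ℝ → ℝ by r₀(x) = L( (2κζ/π) / (x² + ζ²) ), corresponding to the kink initial twist profile w₀(x) = −(2κ/π)·arctan(x/ζ). Then: r₀ is an even function; r₀(x) > 0 for every x ∈ ℝ; lim_{x→+∞} r₀(x) = 0; and r₀'(α) < 0 for every α > 0. Consequently, for every α > 0 the breakdown condition r₀'(α)·( r₀(α) + lim_{x→+∞} r₀(x) ) < 0 holds. -/

import Mathlib

open Filter

/-- The primitive `L` of the wave velocity `Q(ξ) = √(1+ξ²)` with `L 0 = 0`. -/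
noncomputable def L (u : ℝ) : ℝ := (u * Real.sqrt (1 + u ^ 2) + Real.arsinh u) / 2

lemma L_hasDerivAt (u : ℝ) : HasDerivAt L (Real.sqrt (1 + u ^ 2)) u := by
  have h1 : (0:ℝ) < 1 + u ^ 2 := by positivity
  have hs : 0 < Real.sqrt (1 + u ^ 2) := Real.sqrt_pos.2 h1
  have hsq : Real.sqrt (1 + u ^ 2) ^ 2 = 1 + u ^ 2 := Real.sq_sqrt h1.le
  have hin : HasDerivAt (fun u : ℝ => 1 + u ^ 2) (2 * u) u := by
    simpa using ((hasDerivAt_pow 2 u).const_add 1)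
  have hsqrt : HasDerivAt (fun u : ℝ => Real.sqrt (1 + u ^ 2))
      (1 / (2 * Real.sqrt (1 + u ^ 2)) * (2 * u)) u :=
    (Real.hasDerivAt_sqrt h1.ne').comp u hin
  have hmul : HasDerivAt (fun u : ℝ => u * Real.sqrt (1 + u ^ 2))
      (1 * Real.sqrt (1 + u ^ 2) + u * (1 / (2 * Real.sqrt (1 + u ^ 2)) * (2 * u))) u :=
    (hasDerivAt_id u).mul hsqrt
  have h := (hmul.add (Real.hasDerivAt_arsinh u)).div_const 2
  refine h.congr_deriv ?_
  have : Real.sqrt (1 + u ^ 2) * Real.sqrt (1 + u ^ 2) = 1 + u ^ 2 := by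
    nlinarith [hsq]
  field_simp
  nlinarith [this, hs]

lemma L_pos {u : ℝ} (hu : 0 < u) : 0 < L u := by
  have h1 : 0 < Real.sqrt (1 + u ^ 2) := Real.sqrt_pos.2 (by positivity)
  have h2 : 0 < Real.arsinh u := Real.arsinh_pos_iff.2 hu
  have : 0 < u * Real.sqrt (1 + u ^ 2) := mul_pos hu h1
  unfold L; linarith

lemma L_zero : L 0 = 0 := by simp [L]

/-- for the kink initial profile `w₀(x) = −(2κ/π) arctan(x/ζ)`, the initial
Riemann invariant `r₀(x) = L((2κζ/π)/(x²+ζ²))` is even, positive, tends to `0` at `+∞`,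
has negative derivative for `α > 0`, and hence satisfies the breakdown condition
`r₀'(α)(r₀(α) + r₀(+∞)) < 0` for every `α > 0`. -/
theorem kink_breakdown_condition
    (κ ζ : ℝ) (hκ : 0 < κ) (hζ : 0 < ζ)
    (r₀ : ℝ → ℝ)
    (hr₀ : ∀ x : ℝ, r₀ x = L ((2 * κ * ζ / Real.pi) / (x ^ 2 + ζ ^ 2))) :
    (∀ x : ℝ, r₀ (-x) = r₀ x) ∧
    (∀ x : ℝ, 0 < r₀ x) ∧
    Tendsto r₀ atTop (nhds 0) ∧
    (∀ α : ℝ, 0 < α → deriv r₀ α < 0) ∧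
    (∀ α : ℝ, 0 < α → deriv r₀ α * (r₀ α + limUnder atTop r₀) < 0) := by
  set c : ℝ := 2 * κ * ζ / Real.pi with hc
  have hcpos : 0 < c := by
    have := Real.pi_pos
    positivity
  have hden : ∀ x : ℝ, 0 < x ^ 2 + ζ ^ 2 := fun x => by positivity
  have heven : ∀ x : ℝ, r₀ (-x) = r₀ x := by
    intro x; rw [hr₀, hr₀]; ring_nf
  have hpos : ∀ x : ℝ, 0 < r₀ x := by
    intro x; rw [hr₀]
    exact L_pos (div_pos hcpos (hden x))
  have htend : Tendsto r₀ atTop (nhds 0) := by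
    have hg : Tendsto (fun x : ℝ => c / (x ^ 2 + ζ ^ 2)) atTop (nhds 0) := by
      apply Tendsto.div_atTop (tendsto_const_nhds)
      apply Filter.tendsto_atTop_add_const_right
      exact tendsto_pow_atTop (by norm_num)
    have hL : Tendsto L (nhds 0) (nhds (L 0)) := (L_hasDerivAt 0).continuousAt
    rw [L_zero] at hL
    have : Tendsto (fun x : ℝ => L (c / (x ^ 2 + ζ ^ 2))) atTop (nhds 0) := hL.comp hg
    refine this.congr fun x => (hr₀ x).symm
  have hderiv : ∀ α : ℝ, 0 < α → deriv r₀ α < 0 := by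
    intro α hα
    have h1 : HasDerivAt (fun x : ℝ => x ^ 2 + ζ ^ 2) (2 * α) α := by
      simpa using ((hasDerivAt_pow 2 α).add_const (ζ ^ 2))
    have hg : HasDerivAt (fun x : ℝ => c / (x ^ 2 + ζ ^ 2))
        ((0 * (α ^ 2 + ζ ^ 2) - c * (2 * α)) / (α ^ 2 + ζ ^ 2) ^ 2) α :=
      (hasDerivAt_const α c).div h1 (hden α).ne'
    have hr : HasDerivAt r₀
        (Real.sqrt (1 + (c / (α ^ 2 + ζ ^ 2)) ^ 2) *
          ((0 * (α ^ 2 + ζ ^ 2) - c * (2 * α)) / (α ^ 2 + ζ ^ 2) ^ 2)) α := by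
      have := (L_hasDerivAt (c / (α ^ 2 + ζ ^ 2))).comp α hg
      refine HasDerivAt.congr_of_eventuallyEq this ?_
      filter_upwards with x
      exact hr₀ x
    rw [hr.deriv]
    have hsp : 0 < Real.sqrt (1 + (c / (α ^ 2 + ζ ^ 2)) ^ 2) :=
      Real.sqrt_pos.2 (by positivity)
    have hneg : (0 * (α ^ 2 + ζ ^ 2) - c * (2 * α)) / (α ^ 2 + ζ ^ 2) ^ 2 < 0 := by
      apply div_neg_of_neg_of_pos
      · nlinarith
      · positivity
    exact mul_neg_of_pos_of_neg hsp hneg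
  refine ⟨heven, hpos, htend, hderiv, fun α hα => ?_⟩
  have hlim : limUnder atTop r₀ = 0 := htend.limUnder_eq
  rw [hlim, add_zero]
  exact mul_neg_of_neg_of_pos (hderiv α hα) (hpos α)
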